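/- Let λ ∈ V be a dominant weight, w ∈ W, and fix an index 1 ≤ i ≤ r. Suppose μ' ∈ P_λ^w is maximal in the α_i-direction, i.e., for every k ∈ ℚ, μ' + k α_i ∈ P_λ^w implies k ≤ 0. Then μ' can be written as a convex combination μ' = Σ_u b_u · uλ, where the sum runs over u ∈ W with u ≤ w and u⁻¹ α_i ∈ Φ⁺, each b_u ∈ ℚ is ≥ 0, and Σ_u b_u = 1. -/

import Mathlib

open scoped Classical

/-- Data of a root system with a fixed choice of simple roots: an ambient
`ℚ`-vector space `V`, a set of roots `Φ` with a distinguished subset `pos` of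
positive roots, a coroot functional `coroot β = ⟨·, β^∨⟩` for each root, and
simple roots `α 1, …, α r`. -/
structure RootData where
  r : ℕ
  V : Type
  [grp : AddCommGroup V]
  [mod : Module ℚ V]
  Φ : Set V
  pos : Set V
  coroot : V → Module.Dual ℚ V
  α : Fin r → V

attribute [instance] RootData.grp RootData.mod

namespace RootData

variable (R : RootData)

/-- The group of linear automorphisms of `V`, in which the Weyl group lives. -/
abbrev Aut : Type := R.V ≃ₗ[ℚ] R.V

/-- The linear map `v ↦ v - ⟨v, β^∨⟩ β`. -/
noncomputable def reflMap (β : R.V) : R.V →ₗ[ℚ] R.V :=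
  LinearMap.id - (R.coroot β).smulRight β

/-- The reflection `s_β` associated to a root `β`, as a linear automorphism. -/
noncomputable def s (β : R.V) : R.Aut :=
  if h : (R.reflMap β).comp (R.reflMap β) = LinearMap.id then
    LinearEquiv.ofLinear (R.reflMap β) (R.reflMap β) h h
  else LinearEquiv.refl ℚ R.V

/-- The simple reflections `s_i := s_{α_i}`. -/
noncomputable def S (i : Fin R.r) : R.Aut := R.s (R.α i)

/-- The Weyl group `W`, generated by the simple reflections. -/
noncomputable def weylGroup : Subgroup R.Aut := Subgroup.closure (Set.range R.S)

/-- The product `s_{i_1} ⋯ s_{i_k}` of a word in the simple reflections. -/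
noncomputable def wordProd (l : List (Fin R.r)) : R.Aut := (l.map R.S).prod

/-- The length function on `W`: least length of a word in the simple
reflections expressing the given element. -/
noncomputable def len (w : R.Aut) : ℕ :=
  sInf {n | ∃ l : List (Fin R.r), l.length = n ∧ R.wordProd l = w}

/-- A word is reduced if its length equals the length of its product. -/
def Reduced (l : List (Fin R.r)) : Prop := R.len (R.wordProd l) = l.length

/-- The Bruhat order on `W`: `u ≤ w` iff some reduced word for `w` has a
subword whose product is `u`. -/
def BruhatLE (u w : R.Aut) : Prop :=
  ∃ l : List (Fin R.r), R.Reduced l ∧ R.wordProd l = w ∧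
    ∃ l' : List (Fin R.r), l'.Sublist l ∧ R.wordProd l' = u

/-- Strict Bruhat order. -/
def BruhatLT (u w : R.Aut) : Prop := R.BruhatLE u w ∧ u ≠ w

/-- One step of the Demazure product: `s_i * w := max {w, s_i w}`. -/
noncomputable def dmulStep (i : Fin R.r) (x : R.Aut) : R.Aut :=
  if R.len x < R.len (R.S i * x) then R.S i * x else x

/-- Demazure product of a word in the simple reflections against `w`:
`s_{i_1} * (s_{i_2} * (⋯ * (s_{i_k} * w)))`. -/
noncomputable def dmulList (l : List (Fin R.r)) (w : R.Aut) : R.Aut :=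
  l.foldr R.dmulStep w

/-- The Demazure product `v * w` on the Weyl group, computed by choosing a
reduced word for `v` (it is independent of this choice). -/
noncomputable def dmul (v w : R.Aut) : R.Aut :=
  if h : ∃ l : List (Fin R.r), R.Reduced l ∧ R.wordProd l = v then
    R.dmulList h.choose w
  else v * w

/-- The parabolic subgroup `W_{P_i}` generated by the simple reflections
`s_j`, `j ≠ i`. -/
noncomputable def WPar (i : Fin R.r) : Subgroup R.Aut :=
  Subgroup.closure (R.S '' {j | j ≠ i})

/-- `W^{P_i}`: the set of minimal-length representatives of cosets of
`W/W_{P_i}`. -/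
def minReps (i : Fin R.r) : Set R.Aut :=
  {v | v ∈ R.weylGroup ∧ ∀ p ∈ R.WPar i, R.len v ≤ R.len (v * p)}

/-- `u` is the minimal-length representative of the coset `w W_{P_i}`. -/
def IsMinRep (i : Fin R.r) (u w : R.Aut) : Prop :=
  u ∈ R.minReps i ∧ u⁻¹ * w ∈ R.WPar i

/-- A weight is dominant if it pairs nonnegatively with every simple coroot. -/
def Dominant (lam : R.V) : Prop := ∀ i : Fin R.r, 0 ≤ R.coroot (R.α i) lam

/-- The dual action of the Weyl group on `V* `: `(u f)(v) = f(u⁻¹ v)`. -/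
noncomputable def dualAct (u : R.Aut) (f : Module.Dual ℚ R.V) : Module.Dual ℚ R.V :=
  f.comp (u.symm : R.V →ₗ[ℚ] R.V)

/-- The Demazure polytope `P_λ^w := conv {uλ : u ∈ W, u ≤ w}`. -/
noncomputable def demPolytope (lam : R.V) (w : R.Aut) : Set R.V :=
  convexHull ℚ {m | ∃ u : R.Aut, u ∈ R.weylGroup ∧ R.BruhatLE u w ∧ m = u lam}

/-- Membership in the weight lattice `X`. -/
def IsWeight (lam : R.V) : Prop := ∀ β ∈ R.Φ, ∃ m : ℤ, R.coroot β lam = (m : ℚ)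

/-- The root lattice `Q = ℤΦ`. -/
noncomputable def rootLattice : AddSubgroup R.V := AddSubgroup.closure R.Φ

/-- `w₀` is the longest element of the Weyl group. -/
def IsLongest (w₀ : R.Aut) : Prop :=
  w₀ ∈ R.weylGroup ∧ ∀ g ∈ R.weylGroup, R.len g ≤ R.len w₀

/-- The positive roots `Φ_{P_i}⁺ = Φ⁺ ∩ span {α_j : j ≠ i}` of the standard
Levi subsystem. -/
def parPos (i : Fin R.r) : Set R.V :=
  {η | η ∈ R.pos ∧ η ∈ Submodule.span ℚ (R.α '' {j | j ≠ i})}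

/-- The value `D_i (e^λ)` of the Demazure operator on a basis element of the
group ring `ℤ[X]`. -/
noncomputable def demOnBasis (i : Fin R.r) (lam : R.V) : R.V →₀ ℤ :=
  if 0 ≤ ⌊R.coroot (R.α i) lam⌋ then
    ∑ k ∈ Finset.range (⌊R.coroot (R.α i) lam⌋.toNat + 1),
      Finsupp.single (lam - (k : ℚ) • R.α i) 1
  else if ⌊R.coroot (R.α i) lam⌋ = -1 then 0
  else - ∑ k ∈ Finset.range ((-⌊R.coroot (R.α i) lam⌋).toNat - 1),
      Finsupp.single (lam + ((k : ℚ) + 1) • R.α i) 1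

/-- The Demazure operator `D_i`, as a `ℤ`-linear endomorphism of the group
ring `ℤ[X]` (realized as finitely supported functions `V →₀ ℤ`). -/
noncomputable def demOp (i : Fin R.r) : (R.V →₀ ℤ) →ₗ[ℤ] (R.V →₀ ℤ) :=
  Finsupp.lsum ℤ fun lam => LinearMap.toSpanSingleton ℤ (R.V →₀ ℤ) (R.demOnBasis i lam)

/-- The Demazure character `D_{i_1} ⋯ D_{i_k} (e^λ)`. -/
noncomputable def demChar (l : List (Fin R.r)) (lam : R.V) : R.V →₀ ℤ :=
  l.foldr (fun i p => R.demOp i p) (Finsupp.single lam 1)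

/-- The axioms of a finite crystallographic root system spanning `V`, with
simple roots `α_i` and positive roots `pos`. -/
structure IsRootSystem (R : RootData) : Prop where
  finite : R.Φ.Finite
  span_top : Submodule.span ℚ R.Φ = ⊤
  ne_zero : ∀ β ∈ R.Φ, β ≠ 0
  coroot_self : ∀ β ∈ R.Φ, R.coroot β β = 2
  crystallographic : ∀ β ∈ R.Φ, ∀ γ ∈ R.Φ, ∃ m : ℤ, R.coroot β γ = (m : ℚ)
  reflection_stable : ∀ β ∈ R.Φ, ∀ γ ∈ R.Φ, γ - R.coroot β γ • β ∈ R.Φ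
  simple_mem : ∀ i, R.α i ∈ R.Φ
  indep : LinearIndependent ℚ R.α
  pos_subset : R.pos ⊆ R.Φ
  pos_or_neg : ∀ β ∈ R.Φ, (β ∈ R.pos ∧ -β ∉ R.pos) ∨ (β ∉ R.pos ∧ -β ∈ R.pos)
  simple_pos : ∀ i, R.α i ∈ R.pos
  pos_nonneg_comb : ∀ β ∈ R.pos, ∃ c : Fin R.r → ℚ, (∀ i, 0 ≤ c i) ∧ β = ∑ i, c i • R.α i

end RootData

namespace RootData

variable (R : RootData)

lemma mulApply (u v : R.Aut) (x : R.V) : (u * v) x = u (v x) := rfl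

lemma oneApply (x : R.V) : (1 : R.Aut) x = x := rfl

lemma S_eq (j : Fin R.r) : R.S j = R.s (R.α j) := rfl

lemma reflMap_apply (β v : R.V) : R.reflMap β v = v - R.coroot β v • β := by
  simp [RootData.reflMap]

lemma reflMap_invol {β : R.V} (h2 : R.coroot β β = 2) (v : R.V) :
    R.reflMap β (R.reflMap β v) = v := by
  simp only [reflMap_apply, map_sub, map_smul, h2, smul_eq_mul]
  module

lemma reflMap_comp_self {β : R.V} (h2 : R.coroot β β = 2) :
    (R.reflMap β).comp (R.reflMap β) = LinearMap.id :=
  LinearMap.ext fun v => reflMap_invol R h2 v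

lemma s_apply {β : R.V} (h2 : R.coroot β β = 2) (v : R.V) :
    R.s β v = v - R.coroot β v • β := by
  simp only [RootData.s, dif_pos (reflMap_comp_self R h2)]
  rw [LinearEquiv.ofLinear_apply, reflMap_apply]

lemma s_mul_self {β : R.V} (h2 : R.coroot β β = 2) : R.s β * R.s β = 1 := by
  refine LinearEquiv.ext fun v => ?_
  show R.s β (R.s β v) = v
  rw [s_apply R h2, s_apply R h2]
  simp only [map_sub, map_smul, h2, smul_eq_mul]
  module

lemma s_inv {β : R.V} (h2 : R.coroot β β = 2) : (R.s β)⁻¹ = R.s β :=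
  inv_eq_of_mul_eq_one_right (s_mul_self R h2)

lemma wordProd_nil : R.wordProd [] = 1 := rfl

lemma wordProd_cons (j : Fin R.r) (t : List (Fin R.r)) :
    R.wordProd (j :: t) = R.S j * R.wordProd t := by
  simp [RootData.wordProd]

lemma wordProd_mem (l : List (Fin R.r)) : R.wordProd l ∈ R.weylGroup := by
  apply Subgroup.list_prod_mem
  intro x hx
  obtain ⟨j, -, rfl⟩ := List.mem_map.mp hx
  exact Subgroup.subset_closure ⟨j, rfl⟩

variable (hR : R.IsRootSystem)
include hR

lemma coroot_simple_self (j : Fin R.r) : R.coroot (R.α j) (R.α j) = 2 :=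
  hR.coroot_self _ (hR.simple_mem j)

lemma S_apply (j : Fin R.r) (v : R.V) :
    R.S j v = v - R.coroot (R.α j) v • R.α j :=
  s_apply R (coroot_simple_self R hR j) v

lemma S_mul_self (j : Fin R.r) : R.S j * R.S j = 1 :=
  s_mul_self R (coroot_simple_self R hR j)

lemma S_inv (j : Fin R.r) : (R.S j)⁻¹ = R.S j :=
  s_inv R (coroot_simple_self R hR j)

lemma S_apply_self (j : Fin R.r) : R.S j (R.α j) = - R.α j := by
  rw [S_apply R hR, coroot_simple_self R hR]
  module

lemma pos_mem_span {β : R.V} (hβ : β ∈ R.pos) :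
    β ∈ Submodule.span ℚ (Set.range R.α) := by
  obtain ⟨c, -, rfl⟩ := hR.pos_nonneg_comb β hβ
  exact Submodule.sum_mem _ fun j _ =>
    Submodule.smul_mem _ _ (Submodule.subset_span ⟨j, rfl⟩)

lemma root_mem_span {β : R.V} (hβ : β ∈ R.Φ) :
    β ∈ Submodule.span ℚ (Set.range R.α) := by
  rcases hR.pos_or_neg β hβ with ⟨h, -⟩ | ⟨-, h⟩
  · exact pos_mem_span R hR h
  · have := Submodule.neg_mem _ (pos_mem_span R hR h)
    simpa using this

lemma span_range_top : Submodule.span ℚ (Set.range R.α) = ⊤ := by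
  have h : Submodule.span ℚ R.Φ ≤ Submodule.span ℚ (Set.range R.α) :=
    Submodule.span_le.mpr fun β hβ => root_mem_span R hR hβ
  rw [hR.span_top] at h
  exact top_unique h

/-- The simple roots, as a basis of `V`. -/
noncomputable def basisOf : Module.Basis (Fin R.r) ℚ R.V :=
  Module.Basis.mk hR.indep (span_range_top R hR).ge

/-- The subgroup of linear automorphisms preserving the set of roots. -/
def stabS : Subgroup R.Aut where
  carrier := {g | (∀ γ ∈ R.Φ, g γ ∈ R.Φ) ∧ (∀ γ ∈ R.Φ, g⁻¹ γ ∈ R.Φ)}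
  one_mem' := ⟨fun γ h => h, fun γ h => h⟩
  mul_mem' := by
    rintro a b ⟨ha1, ha2⟩ ⟨hb1, hb2⟩
    refine ⟨fun γ h => ha1 _ (hb1 γ h), fun γ h => ?_⟩
    rw [mul_inv_rev]
    exact hb2 _ (ha2 γ h)
  inv_mem' := by
    rintro a ⟨ha1, ha2⟩
    refine ⟨ha2, fun γ h => ?_⟩
    rw [inv_inv]
    exact ha1 γ h

lemma stab_finite : (R.stabS : Set R.Aut).Finite := by
  have hΦ : R.Φ.Finite := hR.finite
  have : Finite R.Φ := hΦ.to_subtype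
  apply Set.Finite.of_finite_image
    (f := fun g : R.Aut => fun x : R.Φ => if h : g x.1 ∈ R.Φ then (⟨g x.1, h⟩ : R.Φ) else x)
  · exact Set.Finite.subset Set.finite_univ (Set.subset_univ _)
  · intro g hg g' hg' hfg
    have heq : ∀ x ∈ R.Φ, g x = g' x := by
      intro x hx
      have h1 : g x ∈ R.Φ := hg.1 x hx
      have h2 : g' x ∈ R.Φ := hg'.1 x hx
      have := congrFun hfg ⟨x, hx⟩
      simp only [dif_pos h1, dif_pos h2] at this
      exact congrArg Subtype.val this
    have : (g : R.V →ₗ[ℚ] R.V) = (g' : R.V →ₗ[ℚ] R.V) :=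
      LinearMap.ext_on hR.span_top heq
    exact LinearEquiv.toLinearMap_injective this

/-- A positive-definite bilinear form invariant under all automorphisms preserving `Φ`. -/
noncomputable def Bform : R.V →ₗ[ℚ] R.V →ₗ[ℚ] ℚ :=
  LinearMap.mk₂ ℚ
    (fun y z => ∑ g ∈ (stab_finite R hR).toFinset,
      ∑ j, (basisOf R hR).repr (g y) j * (basisOf R hR).repr (g z) j)
    (by
      intro x x' y
      simp only [map_add, Finsupp.add_apply, add_mul, Finset.sum_add_distrib])
    (by
      intro c x y
      simp only [map_smul, Finsupp.smul_apply, smul_eq_mul, Finset.mul_sum, mul_assoc])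
    (by
      intro x y y'
      simp only [map_add, Finsupp.add_apply, mul_add, Finset.sum_add_distrib])
    (by
      intro c x y
      simp only [map_smul, Finsupp.smul_apply, smul_eq_mul, Finset.mul_sum]
      congr 1; ext g; congr 1; ext j; ring)

lemma Bform_apply (y z : R.V) :
    R.Bform hR y z = ∑ g ∈ (stab_finite R hR).toFinset,
      ∑ j, (basisOf R hR).repr (g y) j * (basisOf R hR).repr (g z) j := rfl

lemma Bform_symm (y z : R.V) : R.Bform hR y z = R.Bform hR z y := by
  rw [Bform_apply, Bform_apply]
  exact Finset.sum_congr rfl fun g _ => Finset.sum_congr rfl fun j _ => mul_comm _ _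

lemma Bform_inv {g0 : R.Aut} (hg : g0 ∈ R.stabS) (y z : R.V) :
    R.Bform hR (g0 y) (g0 z) = R.Bform hR y z := by
  rw [Bform_apply, Bform_apply]
  refine Finset.sum_nbij' (fun g => g * g0) (fun g => g * g0⁻¹) ?_ ?_ ?_ ?_ ?_
  · intro a ha
    rw [Set.Finite.mem_toFinset] at ha ⊢
    exact mul_mem ha hg
  · intro a ha
    rw [Set.Finite.mem_toFinset] at ha ⊢
    exact mul_mem ha (inv_mem hg)
  · intro a _; group
  · intro a _; group
  · intro a _; rfl

lemma Bform_self_pos {x : R.V} (hx : x ≠ 0) : 0 < R.Bform hR x x := by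
  rw [Bform_apply]
  refine Finset.sum_pos' (fun g _ => Finset.sum_nonneg fun j _ => mul_self_nonneg _) ⟨1, ?_, ?_⟩
  · rw [Set.Finite.mem_toFinset]; exact one_mem R.stabS
  · show (0 : ℚ) < ∑ j, (basisOf R hR).repr ((1 : R.Aut) x) j * (basisOf R hR).repr ((1 : R.Aut) x) j
    obtain ⟨j, hj⟩ : ∃ j, (basisOf R hR).repr x j ≠ 0 := by
      by_contra hcon
      push_neg at hcon
      apply hx
      have h0 : (basisOf R hR).repr x = 0 := Finsupp.ext hcon
      simpa using congrArg (basisOf R hR).repr.symm h0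
    exact Finset.sum_pos' (fun j _ => mul_self_nonneg _)
      ⟨j, Finset.mem_univ j, mul_self_pos.mpr hj⟩

lemma s_mem_stabS {β : R.V} (hβ : β ∈ R.Φ) : R.s β ∈ R.stabS := by
  have h2 := hR.coroot_self β hβ
  constructor
  · intro γ hγ
    rw [s_apply R h2]
    exact hR.reflection_stable β hβ γ hγ
  · intro γ hγ
    show (R.s β)⁻¹ γ ∈ R.Φ
    rw [s_inv R h2, s_apply R h2]
    exact hR.reflection_stable β hβ γ hγ

lemma S_mem_stabS (j : Fin R.r) : R.S j ∈ R.stabS :=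
  s_mem_stabS R hR (hR.simple_mem j)

lemma weylGroup_le_stabS : R.weylGroup ≤ R.stabS := by
  apply (Subgroup.closure_le _).mpr
  rintro _ ⟨j, rfl⟩
  exact S_mem_stabS R hR j

lemma coroot_B {β : R.V} (hβ : β ∈ R.Φ) (v : R.V) :
    R.coroot β v * R.Bform hR β β = 2 * R.Bform hR v β := by
  have h2 := hR.coroot_self β hβ
  have hinv := Bform_inv R hR (s_mem_stabS R hR hβ) v β
  have hsββ : R.s β β = -β := by
    rw [s_apply R h2, h2]; module
  rw [s_apply R h2, hsββ] at hinv
  have hexp : R.Bform hR (v - R.coroot β v • β) (-β)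
      = - R.Bform hR v β + R.coroot β v * R.Bform hR β β := by
    simp only [map_sub, map_neg, map_smul, LinearMap.sub_apply, LinearMap.smul_apply,
      smul_eq_mul]
    ring
  rw [hexp] at hinv
  linarith

lemma coroot_natural {g : R.Aut} (hg : g ∈ R.stabS) {β : R.V} (hβ : β ∈ R.Φ) (v : R.V) :
    R.coroot (g β) v = R.coroot β (g⁻¹ v) := by
  have hgβ : g β ∈ R.Φ := hg.1 β hβ
  have h1 := coroot_B R hR hgβ v
  have h2 := coroot_B R hR hβ (g⁻¹ v)
  have e1 : R.Bform hR (g β) (g β) = R.Bform hR β β := Bform_inv R hR hg β β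
  have e2 : R.Bform hR v (g β) = R.Bform hR (g⁻¹ v) β := by
    conv_lhs => rw [show v = g (g⁻¹ v) from (g.apply_symm_apply v).symm]
    exact Bform_inv R hR hg (g⁻¹ v) β
  have hne : R.Bform hR β β ≠ 0 := ne_of_gt (Bform_self_pos R hR (hR.ne_zero β hβ))
  apply mul_right_cancel₀ hne
  rw [e1] at h1
  rw [h1, h2, e2]

lemma coroot_neg {β : R.V} (hβ : β ∈ R.Φ) (hβ' : -β ∈ R.Φ) (v : R.V) :
    R.coroot (-β) v = - R.coroot β v := by
  have h1 := coroot_B R hR hβ' v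
  have h2 := coroot_B R hR hβ v
  have hne : R.Bform hR β β ≠ 0 := ne_of_gt (Bform_self_pos R hR (hR.ne_zero β hβ))
  apply mul_right_cancel₀ hne
  have e1 : R.Bform hR (-β) (-β) = R.Bform hR β β := by simp
  have e2 : R.Bform hR v (-β) = - R.Bform hR v β := by simp
  rw [e1, e2] at h1
  linarith

lemma s_propor {β : R.V} {c : ℚ} {j : Fin R.r} (hβ : β ∈ R.Φ) (hc : c ≠ 0)
    (heq : β = c • R.α j) : R.s β = R.S j := by
  have key : ∀ v, R.coroot β v • β = R.coroot (R.α j) v • R.α j := by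
    intro v
    have h1 := coroot_B R hR hβ v
    have h2 := coroot_B R hR (hR.simple_mem j) v
    have e1 : R.Bform hR β β = c * (c * R.Bform hR (R.α j) (R.α j)) := by
      rw [heq]
      simp only [map_smul, LinearMap.smul_apply, smul_eq_mul]
    have e2 : R.Bform hR v β = c * R.Bform hR v (R.α j) := by
      rw [heq]
      simp only [map_smul, smul_eq_mul]
    have hne : R.Bform hR (R.α j) (R.α j) ≠ 0 :=
      ne_of_gt (Bform_self_pos R hR (hR.ne_zero _ (hR.simple_mem j)))
    have hcc : R.coroot β v * c = R.coroot (R.α j) v := by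
      apply mul_right_cancel₀ (mul_ne_zero hc hne)
      rw [e1, e2] at h1
      linear_combination h1 - c * h2
    have hsmul : ∀ a : ℚ, a • β = (a * c) • R.α j := fun a => by rw [heq, smul_smul]
    rw [hsmul, hcc]
  refine LinearEquiv.ext fun v => ?_
  rw [s_apply R (hR.coroot_self β hβ), S_eq, s_apply R (coroot_simple_self R hR j), key]

lemma s_conj {g : R.Aut} (hg : g ∈ R.stabS) {β : R.V} (hβ : β ∈ R.Φ) :
    R.s (g β) = g * R.s β * g⁻¹ := by
  have hgβ : g β ∈ R.Φ := hg.1 β hβ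
  refine LinearEquiv.ext fun v => ?_
  show R.s (g β) v = g (R.s β (g⁻¹ v))
  rw [s_apply R (hR.coroot_self _ hgβ), s_apply R (hR.coroot_self β hβ),
    coroot_natural R hR hg hβ v, map_sub, map_smul]
  congr 1
  exact (g.apply_symm_apply v).symm

lemma pos_reflect_neg {γ : R.V} {j : Fin R.r} (hγ : γ ∈ R.pos) (hneg : R.S j γ ∉ R.pos) :
    ∃ c : ℚ, 0 < c ∧ γ = c • R.α j := by
  obtain ⟨c, hc0, hγeq⟩ := hR.pos_nonneg_comb γ hγ
  have hγΦ : γ ∈ R.Φ := hR.pos_subset hγ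
  have hSγΦ : R.S j γ ∈ R.Φ := by
    rw [S_apply R hR]
    exact hR.reflection_stable _ (hR.simple_mem j) _ hγΦ
  have hnegpos : -(R.S j γ) ∈ R.pos :=
    ((hR.pos_or_neg _ hSγΦ).resolve_left fun h => hneg h.1).2
  obtain ⟨e, he0, heeq⟩ := hR.pos_nonneg_comb _ hnegpos
  set d := R.coroot (R.α j) γ with hd
  have hsum : ∑ t, (c t + e t - (if t = j then d else 0)) • R.α t = 0 := by
    have hite : ∑ t, ((if t = j then d else 0) • R.α t) = d • R.α j := by
      simp [ite_smul]
    have hexpand : ∑ t, (c t + e t - (if t = j then d else 0)) • R.α t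
        = (∑ t, c t • R.α t) + (∑ t, e t • R.α t)
          - ∑ t, ((if t = j then d else 0) • R.α t) := by
      rw [← Finset.sum_add_distrib, ← Finset.sum_sub_distrib]
      exact Finset.sum_congr rfl fun t _ => by rw [sub_smul, add_smul]
    rw [hexpand, hite, ← hγeq, ← heeq]
    have : R.S j γ = γ - d • R.α j := S_apply R hR j γ
    rw [this]
    module
  have hall := Fintype.linearIndependent_iff.mp hR.indep _ hsum
  have hzero : ∀ t, t ≠ j → c t = 0 := by
    intro t ht
    have := hall t
    rw [if_neg ht] at this
    have h1 := hc0 t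
    have h2 := he0 t
    linarith
  have hγj : γ = c j • R.α j := by
    rw [hγeq]
    rw [Finset.sum_eq_single_of_mem j (Finset.mem_univ j)]
    intro t _ ht
    rw [hzero t ht, zero_smul]
  refine ⟨c j, ?_, hγj⟩
  rcases lt_or_eq_of_le (hc0 j) with h | h
  · exact h
  · exfalso
    apply hR.ne_zero γ hγΦ
    rw [hγj, ← h, zero_smul]

lemma exchange :
    ∀ (l : List (Fin R.r)) (β : R.V), β ∈ R.pos → (R.wordProd l)⁻¹ β ∉ R.pos →
      ∃ l' : List (Fin R.r), l'.Sublist l ∧ R.wordProd l' = R.s β * R.wordProd l := by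
  intro l
  induction l with
  | nil =>
    intro β hβ h
    exact absurd (by simpa [RootData.wordProd] using hβ) h
  | cons j t ih =>
    intro β hβ h
    have hβΦ : β ∈ R.Φ := hR.pos_subset hβ
    have hcons : R.wordProd (j :: t) = R.S j * R.wordProd t := wordProd_cons R j t
    by_cases hc : R.S j β ∈ R.pos
    · have hpre : (R.wordProd t)⁻¹ (R.S j β) ∉ R.pos := by
        intro hcon
        apply h
        rw [hcons, mul_inv_rev, S_inv R hR j]
        exact hcon
      obtain ⟨t', hsub, hprod⟩ := ih (R.S j β) hc hpre
      refine ⟨j :: t', hsub.cons₂ j, ?_⟩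
      have hconj : R.s (R.S j β) = R.S j * R.s β * (R.S j)⁻¹ :=
        s_conj R hR (S_mem_stabS R hR j) hβΦ
      rw [wordProd_cons, hprod, hconj, S_inv R hR j, hcons]
      simp only [← mul_assoc]
      rw [S_mul_self R hR j, one_mul]
    · obtain ⟨c, hc0, hceq⟩ := pos_reflect_neg R hR hβ hc
      have hsS : R.s β = R.S j := s_propor R hR hβΦ (ne_of_gt hc0) hceq
      refine ⟨t, List.sublist_cons_self j t, ?_⟩
      rw [hcons, hsS, ← mul_assoc, S_mul_self R hR j, one_mul]

lemma bruhat_step {u w : R.Aut} (i : Fin R.r)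
    (hu : R.BruhatLE u w) (hneg : u⁻¹ (R.α i) ∉ R.pos) : R.BruhatLE (R.S i * u) w := by
  obtain ⟨l, hred, hprod, l', hsub, hprod'⟩ := hu
  obtain ⟨l'', hsub'', hprod''⟩ :=
    exchange R hR l' (R.α i) (hR.simple_pos i) (by rw [hprod']; exact hneg)
  exact ⟨l, hred, hprod, l'', hsub''.trans hsub, by rw [hprod'', hprod']; rfl⟩

lemma coroot_dominant {lam β : R.V} (hdom : R.Dominant lam) (hβ : β ∈ R.pos) :
    0 ≤ R.coroot β lam := by
  have hβΦ : β ∈ R.Φ := hR.pos_subset hβ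
  have h1 := coroot_B R hR hβΦ lam
  have hBpos : 0 < R.Bform hR β β := Bform_self_pos R hR (hR.ne_zero β hβΦ)
  have hBlam : 0 ≤ R.Bform hR lam β := by
    obtain ⟨c, hc0, hcomb⟩ := hR.pos_nonneg_comb β hβ
    rw [hcomb, map_sum]
    apply Finset.sum_nonneg
    intro j _
    rw [map_smul, smul_eq_mul]
    have h2 := coroot_B R hR (hR.simple_mem j) lam
    have h3 := hdom j
    have hBα : 0 < R.Bform hR (R.α j) (R.α j) :=
      Bform_self_pos R hR (hR.ne_zero _ (hR.simple_mem j))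
    have h4 : 0 ≤ R.Bform hR lam (R.α j) := by nlinarith
    exact mul_nonneg (hc0 j) h4
  nlinarith

end RootData

theorem statement18 (R : RootData) (hR : R.IsRootSystem)
    (lam : R.V) (hdom : R.Dominant lam)
    (w : R.Aut) (hw : w ∈ R.weylGroup) (i : Fin R.r)
    (mu' : R.V) (hmem : mu' ∈ R.demPolytope lam w)
    (hmax : ∀ k : ℚ, mu' + k • R.α i ∈ R.demPolytope lam w → k ≤ 0) :
    ∃ (T : Finset R.Aut) (b : R.Aut → ℚ),
      (∀ u ∈ T, R.BruhatLE u w ∧ u⁻¹ (R.α i) ∈ R.pos ∧ 0 ≤ b u) ∧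
      ∑ u ∈ T, b u = 1 ∧ mu' = ∑ u ∈ T, b u • u lam := by
  classical
  have hX : R.demPolytope lam w
      = convexHull ℚ {m | ∃ u : R.Aut, u ∈ R.weylGroup ∧ R.BruhatLE u w ∧ m = u lam} := rfl
  rw [hX, convexHull_eq] at hmem
  obtain ⟨ι, t, cw, z, hc0, hc1, hz, hcm⟩ := hmem
  have hzu : ∀ a : ι, ∃ u : R.Aut,
      a ∈ t → (u ∈ R.weylGroup ∧ R.BruhatLE u w ∧ z a = u lam) := by
    intro a
    by_cases ha : a ∈ t
    · obtain ⟨u, hu⟩ := hz a ha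
      exact ⟨u, fun _ => hu⟩
    · exact ⟨1, fun h => absurd h ha⟩
  choose U hU using hzu
  set vv : ι → R.Aut := fun a =>
    if (U a)⁻¹ (R.α i) ∈ R.pos then U a else R.S i * U a with hvv
  set kk : ι → ℚ := fun a =>
    if (U a)⁻¹ (R.α i) ∈ R.pos then 0 else - (R.coroot (R.α i) ((U a) lam)) with hkk
  have hva : ∀ a ∈ t, (vv a ∈ R.weylGroup ∧ R.BruhatLE (vv a) w ∧ (vv a)⁻¹ (R.α i) ∈ R.pos)
      ∧ (0 ≤ kk a ∧ (vv a) lam = (U a) lam + kk a • R.α i) := by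
    intro a ha
    obtain ⟨hW, hB, hzeq⟩ := hU a ha
    by_cases hp : (U a)⁻¹ (R.α i) ∈ R.pos
    · refine ⟨⟨?_, ?_, ?_⟩, ?_, ?_⟩
      · simp only [hvv, if_pos hp]; exact hW
      · simp only [hvv, if_pos hp]; exact hB
      · simp only [hvv, if_pos hp]; exact hp
      · simp only [hkk, if_pos hp]
        exact le_refl 0
      · simp only [hvv, hkk, if_pos hp, zero_smul, add_zero]
    · have hδΦ : (U a)⁻¹ (R.α i) ∈ R.Φ :=
        (RootData.weylGroup_le_stabS R hR hW).2 _ (hR.simple_mem i)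
      have hδneg : -((U a)⁻¹ (R.α i)) ∈ R.pos :=
        ((hR.pos_or_neg _ hδΦ).resolve_left fun h => hp h.1).2
      have hδnegΦ : -((U a)⁻¹ (R.α i)) ∈ R.Φ := hR.pos_subset hδneg
      have hSiW : R.S i ∈ R.weylGroup := Subgroup.subset_closure ⟨i, rfl⟩
      have hcor : R.coroot (R.α i) ((U a) lam) = R.coroot ((U a)⁻¹ (R.α i)) lam := by
        have hnat := RootData.coroot_natural R hR (RootData.weylGroup_le_stabS R hR hW)
          hδΦ ((U a) lam)
        have happ : (U a) ((U a)⁻¹ (R.α i)) = R.α i := (U a).apply_symm_apply (R.α i)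
        rw [happ] at hnat
        rw [hnat]
        congr 1
        exact (U a).symm_apply_apply lam
      have hk : kk a = R.coroot (-((U a)⁻¹ (R.α i))) lam := by
        simp only [hkk, if_neg hp]
        rw [hcor, RootData.coroot_neg R hR hδΦ hδnegΦ]
      refine ⟨⟨?_, ?_, ?_⟩, ?_, ?_⟩
      · simp only [hvv, if_neg hp]
        exact mul_mem hSiW hW
      · simp only [hvv, if_neg hp]
        exact RootData.bruhat_step R hR i hB hp
      · simp only [hvv, if_neg hp]
        rw [mul_inv_rev, RootData.S_inv R hR i, RootData.mulApply,
          RootData.S_apply_self R hR i, map_neg]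
        exact hδneg
      · rw [hk]
        exact RootData.coroot_dominant R hR hdom hδneg
      · simp only [hvv, hkk, if_neg hp]
        rw [RootData.mulApply, RootData.S_apply R hR i]
        module
  set K : ℚ := ∑ a ∈ t, cw a * kk a with hK
  have h6 : ∑ a ∈ t, cw a • (vv a) lam = mu' + K • R.α i := by
    have e1 : ∀ a ∈ t, cw a • (vv a) lam = cw a • z a + (cw a * kk a) • R.α i := by
      intro a ha
      rw [(hva a ha).2.2, (hU a ha).2.2, smul_add, smul_smul]
    calc ∑ a ∈ t, cw a • (vv a) lam
        = ∑ a ∈ t, (cw a • z a + (cw a * kk a) • R.α i) := Finset.sum_congr rfl e1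
      _ = (∑ a ∈ t, cw a • z a) + (∑ a ∈ t, cw a * kk a) • R.α i := by
          rw [Finset.sum_add_distrib, Finset.sum_smul]
      _ = mu' + K • R.α i := by
          rw [← Finset.centerMass_eq_of_sum_1 _ _ hc1, hcm, hK]
  have h7 : mu' + K • R.α i ∈ R.demPolytope lam w := by
    rw [hX]
    have hmem2 := Finset.centerMass_mem_convexHull
      (s := {m | ∃ u : R.Aut, u ∈ R.weylGroup ∧ R.BruhatLE u w ∧ m = u lam})
      (z := fun b => (vv b) lam) t hc0 (by rw [hc1]; norm_num)
      (fun a ha => ⟨vv a, (hva a ha).1.1, (hva a ha).1.2.1, rfl⟩)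
    rw [Finset.centerMass_eq_of_sum_1 _ _ hc1, h6] at hmem2
    exact hmem2
  have hK0 : 0 ≤ K := Finset.sum_nonneg fun a ha =>
    mul_nonneg (hc0 a ha) (hva a ha).2.1
  have hKz : K = 0 := le_antisymm (hmax K h7) hK0
  have hterm : ∀ a ∈ t, cw a * kk a = 0 :=
    (Finset.sum_eq_zero_iff_of_nonneg fun a ha =>
      mul_nonneg (hc0 a ha) (hva a ha).2.1).mp (hK ▸ hKz)
  have hmain : mu' = ∑ a ∈ t, cw a • (vv a) lam := by
    rw [h6, hKz, zero_smul, add_zero]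
  refine ⟨t.image vv, fun g => ∑ a ∈ t.filter (fun a => vv a = g), cw a, ?_, ?_, ?_⟩
  · intro u hu
    obtain ⟨a, ha, rfl⟩ := Finset.mem_image.mp hu
    exact ⟨(hva a ha).1.2.1, (hva a ha).1.2.2,
      Finset.sum_nonneg fun b hb => hc0 b (Finset.mem_filter.mp hb).1⟩
  · exact (Finset.sum_fiberwise_of_maps_to (fun a ha => Finset.mem_image_of_mem vv ha)
      cw).trans hc1
  · calc mu' = ∑ a ∈ t, cw a • (vv a) lam := hmain
      _ = ∑ u ∈ t.image vv, ∑ a ∈ t.filter (fun a => vv a = u), cw a • (vv a) lam :=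
          (Finset.sum_fiberwise_of_maps_to (fun a ha => Finset.mem_image_of_mem vv ha) _).symm
      _ = ∑ u ∈ t.image vv, (∑ a ∈ t.filter (fun a => vv a = u), cw a) • u lam := by
          refine Finset.sum_congr rfl fun u hu => ?_
          rw [Finset.sum_smul]
          refine Finset.sum_congr rfl fun a ha => ?_
          rw [(Finset.mem_filter.mp ha).2]
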